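/- Every eigenvalue λ ∈ ℂ of the matrix 𝓑 satisfies Re(λ) ≥ 0 (𝓑 is positive semistable). -/

import Mathlib

open Matrix

/-- The double saddle point matrix 𝓑 = [[A, Bᵀ, 0], [−B, 0, −Cᵀ], [0, C, 0]]. -/
def calB {n m l : ℕ} (A : Matrix (Fin n) (Fin n) ℝ) (B : Matrix (Fin m) (Fin n) ℝ)
    (C : Matrix (Fin l) (Fin m) ℝ) :
    Matrix ((Fin n ⊕ Fin m) ⊕ Fin l) ((Fin n ⊕ Fin m) ⊕ Fin l) ℝ :=
  fromBlocks (fromBlocks A Bᵀ (-B) 0) (fromRows 0 (-Cᵀ)) (fromCols 0 C) 0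

lemma quad_transpose {N : Type*} [Fintype N] (M : Matrix N N ℝ) (w : N → ℝ) :
    w ⬝ᵥ Mᵀ *ᵥ w = w ⬝ᵥ M *ᵥ w := by
  rw [mulVec_transpose, dotProduct_comm, ← dotProduct_mulVec]

lemma calB_add_transpose {n m l : ℕ} (A : Matrix (Fin n) (Fin n) ℝ)
    (B : Matrix (Fin m) (Fin n) ℝ) (C : Matrix (Fin l) (Fin m) ℝ) :
    calB A B C + (calB A B C)ᵀ
      = fromBlocks (fromBlocks (A + Aᵀ) 0 0 0) 0 0 0 := by
  simp [calB, fromBlocks_transpose, transpose_fromRows, transpose_fromCols,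
    fromBlocks_add]
  constructor <;> ext i j <;> cases i <;> cases j <;>
    simp [fromRows_apply_inl, fromRows_apply_inr, fromCols_apply_inl, fromCols_apply_inr]

lemma quad_nonneg {n m l : ℕ} (A : Matrix (Fin n) (Fin n) ℝ)
    (B : Matrix (Fin m) (Fin n) ℝ) (C : Matrix (Fin l) (Fin m) ℝ) (hA : A.PosDef)
    (w : (Fin n ⊕ Fin m) ⊕ Fin l → ℝ) : 0 ≤ w ⬝ᵥ calB A B C *ᵥ w := by
  set x : Fin n → ℝ := fun i => w (.inl (.inl i)) with hx
  have key : 2 * (w ⬝ᵥ calB A B C *ᵥ w) = 2 * (x ⬝ᵥ A *ᵥ x) := by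
    rw [two_mul]
    nth_rewrite 2 [← quad_transpose (calB A B C) w]
    rw [← dotProduct_add, ← add_mulVec, calB_add_transpose]
    have : w ⬝ᵥ fromBlocks (fromBlocks (A + Aᵀ) 0 0 0) 0 0 0 *ᵥ w
        = x ⬝ᵥ (A + Aᵀ) *ᵥ x := by
      simp [dotProduct, mulVec, Fintype.sum_sum_type, fromBlocks, hx]
    rw [this, add_mulVec, dotProduct_add, quad_transpose, two_mul]
  have h0 : 0 ≤ x ⬝ᵥ A *ᵥ x := by
    have := hA.posSemidef.dotProduct_mulVec_nonneg x
    simpa using this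
  linarith

lemma re_quad {N : Type*} [Fintype N] (D : Matrix N N ℝ) (v : N → ℂ) :
    (star v ⬝ᵥ (D.map Complex.ofReal) *ᵥ v).re
      = (fun i => (v i).re) ⬝ᵥ D *ᵥ (fun i => (v i).re)
        + (fun i => (v i).im) ⬝ᵥ D *ᵥ (fun i => (v i).im) := by
  simp only [dotProduct, mulVec, map_apply, Pi.star_apply, Complex.re_sum,
    Finset.mul_sum, ← Finset.sum_add_distrib]
  refine Finset.sum_congr rfl fun i _ => ?_
  refine Finset.sum_congr rfl fun j _ => ?_
  simp [Complex.mul_re]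

/-- Every eigenvalue λ ∈ ℂ of 𝓑 satisfies Re(λ) ≥ 0 (𝓑 is positive semistable). -/
theorem calB_positive_semistable {n m l : ℕ} (A : Matrix (Fin n) (Fin n) ℝ)
    (B : Matrix (Fin m) (Fin n) ℝ) (C : Matrix (Fin l) (Fin m) ℝ)
    (hA : A.PosDef) (lam : ℂ) (v : (Fin n ⊕ Fin m) ⊕ Fin l → ℂ) (hv : v ≠ 0)
    (heig : ((calB A B C).map Complex.ofReal).mulVec v = lam • v) :
    0 ≤ lam.re := by
  set t : ℝ := ∑ i, Complex.normSq (v i) with ht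
  have htpos : 0 < t := by
    obtain ⟨i, hi⟩ := Function.ne_iff.mp hv
    exact Finset.sum_pos' (fun j _ => Complex.normSq_nonneg _)
      ⟨i, Finset.mem_univ i, by simpa [Complex.normSq_pos] using hi⟩
  have hsv : star v ⬝ᵥ v = (t : ℂ) := by
    simp [dotProduct, ht, mul_comm, Complex.normSq_eq_conj_mul_self]
  have hs : star v ⬝ᵥ ((calB A B C).map Complex.ofReal *ᵥ v) = lam * t := by
    rw [heig, dotProduct_smul, smul_eq_mul, hsv]
  have hre : (star v ⬝ᵥ ((calB A B C).map Complex.ofReal *ᵥ v)).re = lam.re * t := by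
    rw [hs]
    simp [Complex.mul_re]
  have hnn : 0 ≤ lam.re * t := by
    rw [← hre, re_quad]
    exact add_nonneg (quad_nonneg A B C hA _) (quad_nonneg A B C hA _)
  by_contra h
  push_neg at h
  exact absurd hnn (not_le.mpr (mul_neg_of_neg_of_pos h htpos))
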